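/- Let G be a finite graph and a ≥ 1 with sn(G) ≤ a, and suppose G has a tangle T of order at least 70a + 1. Let (X,Y) ∈ T be a separation of G of order exactly 70a with |Y| minimal, set W = X ∩ Y, and let H be a strongly (3|Y|, 1/35)-tame W-cloud in G[X]. Then for every balanced separation (A,B) of order at most a of the graph F = G[Y] ∪ H, we have |A ∩ X ∩ Y| ≤ a. -/

import Mathlib

open Finset

universe u

variable {V : Type u} [Fintype V] [DecidableEq V]

/-- `(A, B)` is a separation of the subgraph `H` of `G`: `A ∪ B` is the vertex set of `H`
and no edge of `H` has one end in `A \ B` and the other in `B \ A`.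
Its order is `(A ∩ B).card`. -/
def SepOf {G : SimpleGraph V} (H : G.Subgraph) (A B : Finset V) : Prop :=
  (↑A ∪ ↑B : Set V) = H.verts ∧
    ∀ u v : V, H.Adj u v → ¬(u ∈ A \ B ∧ v ∈ B \ A)

/-- `(A, B)` is a balanced separation of the subgraph `H`:
`|A \ B| ≤ (2/3) |V(H)|` and `|B \ A| ≤ (2/3) |V(H)|`. -/
def BalancedSepOf {G : SimpleGraph V} (H : G.Subgraph) (A B : Finset V) : Prop :=
  SepOf H A B ∧ 3 * (A \ B).card ≤ 2 * H.verts.ncard ∧ 3 * (B \ A).card ≤ 2 * H.verts.ncard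

/-- The separation number of `G`: the smallest `s` such that every subgraph of `G`
has a balanced separation of order at most `s`. -/
noncomputable def sepNum (G : SimpleGraph V) : ℕ :=
  sInf {s | ∀ H : G.Subgraph, ∃ A B : Finset V, BalancedSepOf H A B ∧ (A ∩ B).card ≤ s}

/-- `(A, B)` is a g-separation of `G`: a pair of subgraphs with `A ∪ B = G` and
`E(A) ∩ E(B) = ∅`.  Its order is `(A.verts ∩ B.verts).ncard`. -/
def IsGSep (G : SimpleGraph V) (A B : G.Subgraph) : Prop :=
  A ⊔ B = ⊤ ∧ A.edgeSet ∩ B.edgeSet = ∅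

/-- `T` is a tangle of order `θ ≥ 1` in `G`. -/
def IsTangle (G : SimpleGraph V) (T : Set (G.Subgraph × G.Subgraph)) (θ : ℕ) : Prop :=
  1 ≤ θ ∧
  (∀ p ∈ T, IsGSep G p.1 p.2) ∧
  (∀ A B : G.Subgraph, IsGSep G A B → (A.verts ∩ B.verts).ncard < θ →
    (A, B) ∈ T ∨ (B, A) ∈ T) ∧
  (∀ p₁ ∈ T, ∀ p₂ ∈ T, ∀ p₃ ∈ T, p₁.1 ⊔ p₂.1 ⊔ p₃.1 ≠ (⊤ : G.Subgraph)) ∧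
  (∀ p ∈ T, p.1.verts ≠ Set.univ)

/-- The tangle number of `G`: the maximum order of a tangle in `G` (`0` if `G` has
no tangle). -/
noncomputable def tangleNum (G : SimpleGraph V) : ℕ :=
  sSup {θ | ∃ T, IsTangle G T θ}

/-- The g-separation `(G[X], G[Y] - E(G[X ∩ Y]))` associated to a separation `(X, Y)`
of `G`; a separation `(X, Y)` belongs to a tangle `T` if this pair does. -/
def sepPair (G : SimpleGraph V) (X Y : Finset V) : G.Subgraph × G.Subgraph :=
  ((⊤ : G.Subgraph).induce ↑X,
   ((⊤ : G.Subgraph).induce ↑Y).deleteEdges ((⊤ : G.Subgraph).induce (↑X ∩ ↑Y : Set V)).edgeSet)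

/-- `u` and `v` both belong to the subgraph `H` and are connected in `H`. -/
def CReach {G : SimpleGraph V} (H : G.Subgraph) (u v : V) : Prop :=
  ∃ (hu : u ∈ H.verts) (hv : v ∈ H.verts), H.coe.Reachable ⟨u, hu⟩ ⟨v, hv⟩

/-- The vertex set of the connected component `H_w` of `H` containing `w`. -/
def cloudComp {G : SimpleGraph V} (H : G.Subgraph) (w : V) : Set V :=
  {v | CReach H w v}

/-- `n(H, U) = Σ_{w ∈ U} |V(H_w)|`. -/
noncomputable def cloudSize {G : SimpleGraph V} (H : G.Subgraph) (U : Finset V) : ℕ :=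
  ∑ w ∈ U, (cloudComp H w).ncard

/-- `H` is a `W`-cloud in `G`: a forest subgraph of `G` in which every connected
component contains exactly one vertex of `W`. -/
def IsCloud (G : SimpleGraph V) (W : Finset V) (H : G.Subgraph) : Prop :=
  H.coe.IsAcyclic ∧ (↑W : Set V) ⊆ H.verts ∧
    ∀ v ∈ H.verts, ∃! w, w ∈ W ∧ CReach H v w

/-- `H` is an `(s, ε)`-tame `W`-cloud: `n(H, U) ≥ s` for every `U ⊆ W` with
`|U| ≥ (1 - ε)|W|`. -/
def IsTameCloud (G : SimpleGraph V) (W : Finset V) (H : G.Subgraph) (s ε : ℝ) : Prop :=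
  IsCloud G W H ∧
    ∀ U ⊆ W, (1 - ε) * (W.card : ℝ) ≤ (U.card : ℝ) → s ≤ (cloudSize H U : ℝ)

/-- `H` is a strongly `(s, ε)`-tame `W`-cloud: `n(H, U) ≥ s + 3 n(H, W \ U)` for every
`U ⊆ W` with `|U| ≥ (1 - ε)|W|`. -/
def IsStronglyTameCloud (G : SimpleGraph V) (W : Finset V) (H : G.Subgraph) (s ε : ℝ) : Prop :=
  IsCloud G W H ∧
    ∀ U ⊆ W, (1 - ε) * (W.card : ℝ) ≤ (U.card : ℝ) →
      s + 3 * (cloudSize H (W \ U) : ℝ) ≤ (cloudSize H U : ℝ)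



section Helpers
set_option linter.unusedSectionVars false
variable {G : SimpleGraph V} {T : Set (G.Subgraph × G.Subgraph)} {θ : ℕ}

lemma eq_top_of (K : G.Subgraph) (hv : ∀ x, x ∈ K.verts)
    (ha : ∀ u v, G.Adj u v → K.Adj u v) : K = ⊤ := by
  apply SimpleGraph.Subgraph.ext
  · exact Set.eq_univ_of_forall hv
  · ext u v
    simp only [SimpleGraph.Subgraph.top_adj]
    exact ⟨fun h => K.adj_sub h, ha u v⟩

lemma sep_side {X' Y' : Finset V} (h : SepOf (⊤ : G.Subgraph) X' Y') {u v : V}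
    (hadj : G.Adj u v) (hu : u ∉ X') : u ∈ Y' ∧ v ∈ Y' := by
  have hcov : ∀ x : V, x ∈ X' ∨ x ∈ Y' := by
    intro x
    have hx : x ∈ (↑X' ∪ ↑Y' : Set V) := by rw [h.1]; trivial
    simpa using hx
  have hu' : u ∈ Y' := (hcov u).resolve_left hu
  refine ⟨hu', ?_⟩
  by_contra hv
  have hvX : v ∈ X' := (hcov v).resolve_right hv
  exact h.2 v u (by simpa using hadj.symm)
    ⟨by simp [Finset.mem_sdiff, hvX, hv], by simp [Finset.mem_sdiff, hu', hu]⟩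

/-- the sepPair-style g-separation -/

lemma gsep_sepPair {X' Y' : Finset V} (h : SepOf (⊤ : G.Subgraph) X' Y') :
    IsGSep G ((⊤ : G.Subgraph).induce ↑X')
      (((⊤ : G.Subgraph).induce ↑Y').deleteEdges
        ((⊤ : G.Subgraph).induce (↑X' ∩ ↑Y' : Set V)).edgeSet) := by
  constructor
  · apply eq_top_of
    · intro x
      have hx : x ∈ (↑X' ∪ ↑Y' : Set V) := by rw [h.1]; trivial
      simpa [SimpleGraph.Subgraph.deleteEdges_verts] using hx
    · intro u v hadj
      simp only [SimpleGraph.Subgraph.sup_adj, SimpleGraph.Subgraph.induce_adj,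
        SimpleGraph.Subgraph.deleteEdges_adj, SimpleGraph.Subgraph.top_adj,
        SimpleGraph.Subgraph.mem_edgeSet, Set.mem_inter_iff, Finset.mem_coe]
      by_cases huX : u ∈ X'
      · by_cases hvX : v ∈ X'
        · exact Or.inl ⟨huX, hvX, hadj⟩
        · obtain ⟨hv', hu'⟩ := sep_side h hadj.symm hvX
          exact Or.inr ⟨⟨hu', hv', hadj⟩, by tauto⟩
      · obtain ⟨hu', hv'⟩ := sep_side h hadj huX
        exact Or.inr ⟨⟨hu', hv', hadj⟩, by tauto⟩
  · ext e
    induction e with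
    | _ u v =>
      simp only [Set.mem_inter_iff, SimpleGraph.Subgraph.mem_edgeSet,
        SimpleGraph.Subgraph.deleteEdges_adj, SimpleGraph.Subgraph.induce_adj,
        SimpleGraph.Subgraph.top_adj, SimpleGraph.Subgraph.mem_edgeSet,
        Set.mem_inter_iff, Finset.mem_coe, Set.mem_empty_iff_false, iff_false]
      tauto

/-- the corner-side-deleted g-separation -/

lemma gsep_corner {X' Y' : Finset V} (h : SepOf (⊤ : G.Subgraph) X' Y') :
    IsGSep G (((⊤ : G.Subgraph).induce ↑X').deleteEdges
        ((⊤ : G.Subgraph).induce (↑X' ∩ ↑Y' : Set V)).edgeSet)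
      ((⊤ : G.Subgraph).induce ↑Y') := by
  have hcov : ∀ x : V, x ∈ X' ∨ x ∈ Y' := by
    intro x
    have hx : x ∈ (↑X' ∪ ↑Y' : Set V) := by rw [h.1]; trivial
    simpa using hx
  constructor
  · apply eq_top_of
    · intro x
      rcases hcov x with hx | hx <;>
        simp [SimpleGraph.Subgraph.deleteEdges_verts, hx]
    · intro u v hadj
      simp only [SimpleGraph.Subgraph.sup_adj, SimpleGraph.Subgraph.induce_adj,
        SimpleGraph.Subgraph.deleteEdges_adj, SimpleGraph.Subgraph.top_adj,
        SimpleGraph.Subgraph.mem_edgeSet, Set.mem_inter_iff, Finset.mem_coe]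
      by_cases huY : u ∈ Y'
      · by_cases hvY : v ∈ Y'
        · exact Or.inr ⟨huY, hvY, hadj⟩
        · -- v ∉ Y' : so v ∈ X' and u ∈ X'
          have hvX : v ∈ X' := (hcov v).resolve_right hvY
          have huX : u ∈ X' := by
            by_contra huX
            exact hvY (sep_side h hadj huX).2
          exact Or.inl ⟨⟨huX, hvX, hadj⟩, by tauto⟩
      · have huX : u ∈ X' := (hcov u).resolve_right huY
        have hvX : v ∈ X' := by
          by_contra hvX
          exact huY (sep_side h hadj.symm hvX).2
        exact Or.inl ⟨⟨huX, hvX, hadj⟩, by tauto⟩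
  · ext e
    induction e with
    | _ u v =>
      simp only [Set.mem_inter_iff, SimpleGraph.Subgraph.mem_edgeSet,
        SimpleGraph.Subgraph.deleteEdges_adj, SimpleGraph.Subgraph.induce_adj,
        SimpleGraph.Subgraph.top_adj, Set.mem_inter_iff, Finset.mem_coe,
        Set.mem_empty_iff_false, iff_false]
      tauto

lemma cut_mem_tangle (hT : IsTangle G T θ) (s : Finset V) (hs : s.card < θ) :
    ((⊤ : G.Subgraph).induce ↑s,
      (⊤ : G.Subgraph).deleteEdges ((⊤ : G.Subgraph).induce ↑s).edgeSet) ∈ T := by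
  set R := (⊤ : G.Subgraph).induce (↑s : Set V) with hR
  set S := (⊤ : G.Subgraph).deleteEdges R.edgeSet with hS
  have hgsep : IsGSep G R S := by
    constructor
    · apply eq_top_of
      · intro x
        right
        simp [hS, SimpleGraph.Subgraph.deleteEdges_verts]
      · intro u v hadj
        by_cases he : s(u, v) ∈ R.edgeSet
        · exact Or.inl (SimpleGraph.Subgraph.mem_edgeSet.1 he)
        · exact Or.inr (by
            simp only [hS, SimpleGraph.Subgraph.deleteEdges_adj,
              SimpleGraph.Subgraph.top_adj]
            exact ⟨hadj, he⟩)
    · ext e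
      induction e with
      | _ u v =>
        simp only [Set.mem_inter_iff, SimpleGraph.Subgraph.mem_edgeSet, hS,
          SimpleGraph.Subgraph.deleteEdges_adj, SimpleGraph.Subgraph.top_adj,
          Set.mem_empty_iff_false, iff_false, SimpleGraph.Subgraph.mem_edgeSet]
        tauto
  have hord : (R.verts ∩ S.verts).ncard < θ := by
    have : R.verts ∩ S.verts = (↑s : Set V) := by
      simp [hR, hS, SimpleGraph.Subgraph.deleteEdges_verts]
    rw [this, Set.ncard_coe_finset]
    exact hs
  rcases hT.2.2.1 R S hgsep hord with hm | hm
  · exact hm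
  · exact absurd (by simp [hS, SimpleGraph.Subgraph.deleteEdges_verts] :
      (S, R).1.verts = Set.univ) (hT.2.2.2.2 _ hm)

lemma sepPair_orient (hT : IsTangle G T θ) {X' Y' : Finset V}
    (h : SepOf (⊤ : G.Subgraph) X' Y') (hcard : (X' ∩ Y').card < θ) :
    sepPair G X' Y' ∈ T ∨
      ((⊤ : G.Subgraph).induce ↑Y',
        ((⊤ : G.Subgraph).induce ↑X').deleteEdges
          ((⊤ : G.Subgraph).induce (↑X' ∩ ↑Y' : Set V)).edgeSet) ∈ T := by
  have hcov : ∀ x : V, x ∈ X' ∨ x ∈ Y' := by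
    intro x
    have hx : x ∈ (↑X' ∪ ↑Y' : Set V) := by rw [h.1]; trivial
    simpa using hx
  set Pd := ((⊤ : G.Subgraph).induce ↑X').deleteEdges
      ((⊤ : G.Subgraph).induce (↑X' ∩ ↑Y' : Set V)).edgeSet with hPd
  set Q := ((⊤ : G.Subgraph).induce ↑Y').deleteEdges
      ((⊤ : G.Subgraph).induce (↑X' ∩ ↑Y' : Set V)).edgeSet with hQ
  set Qf := (⊤ : G.Subgraph).induce (↑Y' : Set V) with hQf
  have hordset : (↑X' ∩ ↑Y' : Set V).ncard < θ := by
    rw [← Finset.coe_inter, Set.ncard_coe_finset]; exact hcard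
  rcases hT.2.2.1 Pd Qf (gsep_corner h) (by
      simpa [hPd, hQf, SimpleGraph.Subgraph.deleteEdges_verts] using hordset) with hm | hm
  · -- (Pd, Qf) ∈ T ⇒ sepPair ∈ T
    left
    rcases hT.2.2.1 ((⊤ : G.Subgraph).induce ↑X') Q (gsep_sepPair h) (by
        simpa [hQ, hQf, SimpleGraph.Subgraph.deleteEdges_verts] using hordset) with hm2 | hm2
    · exact hm2
    · -- contradiction via triple with the cut
      exfalso
      have hcut := cut_mem_tangle hT (X' ∩ Y') hcard
      apply hT.2.2.2.1 _ hm _ hm2 _ hcut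
      apply eq_top_of
      · intro x
        rcases hcov x with hx | hx
        · exact Or.inl (Or.inl (by simp [hPd, SimpleGraph.Subgraph.deleteEdges_verts, hx]))
        · exact Or.inl (Or.inr (by simp [hQ, hQf, SimpleGraph.Subgraph.deleteEdges_verts, hx]))
      · intro u v hadj
        simp only [SimpleGraph.Subgraph.sup_adj, hPd, hQ,
          SimpleGraph.Subgraph.deleteEdges_adj, SimpleGraph.Subgraph.induce_adj,
          SimpleGraph.Subgraph.top_adj, SimpleGraph.Subgraph.mem_edgeSet,
          Set.mem_inter_iff, Finset.mem_coe, Finset.coe_inter, Finset.mem_inter]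
        by_cases hb : (u ∈ X' ∧ u ∈ Y') ∧ (v ∈ X' ∧ v ∈ Y')
        · exact Or.inr ⟨⟨hb.1.1, hb.1.2⟩, ⟨hb.2.1, hb.2.2⟩, hadj⟩
        · left
          by_cases huX : u ∈ X'
          · by_cases hvX : v ∈ X'
            · exact Or.inl ⟨⟨huX, hvX, hadj⟩, by tauto⟩
            · obtain ⟨hv', hu'⟩ := sep_side h hadj.symm hvX
              exact Or.inr ⟨⟨hu', hv', hadj⟩, by tauto⟩
          · obtain ⟨hu', hv'⟩ := sep_side h hadj huX
            exact Or.inr ⟨⟨hu', hv', hadj⟩, by tauto⟩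
  · exact Or.inr hm

lemma creach_refl {H : G.Subgraph} {w : V} (hw : w ∈ H.verts) : CReach H w w :=
  ⟨hw, hw, SimpleGraph.Reachable.refl _⟩

lemma creach_symm {H : G.Subgraph} {u v : V} (h : CReach H u v) : CReach H v u := by
  obtain ⟨hu, hv, r⟩ := h
  exact ⟨hv, hu, r.symm⟩

lemma creach_trans {H : G.Subgraph} {u v x : V} (h : CReach H u v) (h' : CReach H v x) :
    CReach H u x := by
  obtain ⟨hu, hv, r⟩ := h
  obtain ⟨hv', hx, r'⟩ := h'
  exact ⟨hu, hx, r.trans (by convert r' using 2)⟩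

lemma mem_comp_self {H : G.Subgraph} {w : V} (hw : w ∈ H.verts) : w ∈ cloudComp H w :=
  creach_refl hw

lemma comp_subset_verts {H : G.Subgraph} {w : V} : cloudComp H w ⊆ H.verts := by
  rintro v ⟨hu, hv, -⟩
  exact hv

lemma comp_disjoint {W : Finset V} {H : G.Subgraph} (hc : IsCloud G W H)
    {w₁ w₂ : V} (h₁ : w₁ ∈ W) (h₂ : w₂ ∈ W) (hne : w₁ ≠ w₂) :
    cloudComp H w₁ ∩ cloudComp H w₂ = ∅ := by
  rw [Set.eq_empty_iff_forall_notMem]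
  rintro v ⟨hv₁, hv₂⟩
  obtain ⟨w, -, huniq⟩ := hc.2.2 v (comp_subset_verts hv₁)
  exact hne ((huniq w₁ ⟨h₁, creach_symm hv₁⟩).trans (huniq w₂ ⟨h₂, creach_symm hv₂⟩).symm)

lemma comp_cover {W : Finset V} {H : G.Subgraph} (hc : IsCloud G W H)
    {v : V} (hv : v ∈ H.verts) : ∃ w ∈ W, v ∈ cloudComp H w := by
  obtain ⟨w, ⟨hw, hr⟩, -⟩ := hc.2.2 v hv
  exact ⟨w, hw, creach_symm hr⟩

lemma walk_ind {H : G.Subgraph} {P : V → Prop}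
    (hP : ∀ u v : H.verts, H.coe.Adj u v → P u → P v) :
    ∀ {u v : H.verts}, H.coe.Walk u v → P u → P v := by
  intro u v p
  induction p with
  | nil => exact id
  | cons h q ih => exact fun hu => ih (hP _ _ h hu)

lemma comp_subset_of {H F : G.Subgraph} (hHF : H ≤ F) {A B : Finset V}
    (hsep : ∀ u v, F.Adj u v → ¬(u ∈ A \ B ∧ v ∈ B \ A))
    (hverts : ∀ x, x ∈ H.verts → x ∈ A ∨ x ∈ B)
    {w : V} (hdisj : ∀ v ∈ cloudComp H w, ¬(v ∈ A ∧ v ∈ B))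
    (hwA : w ∈ A) (hw : w ∈ H.verts) :
    ∀ v ∈ cloudComp H w, v ∈ A ∧ v ∉ B := by
  have key : ∀ {u v : H.verts}, H.coe.Walk u v →
      (CReach H w ↑u ∧ ↑u ∈ A ∧ ↑u ∉ B) → (CReach H w ↑v ∧ ↑v ∈ A ∧ ↑v ∉ B) := by
    refine walk_ind (P := fun x => CReach H w x ∧ x ∈ A ∧ x ∉ B) ?_
    rintro u v hadj ⟨hr, huA, huB⟩
    have hadj' : H.Adj ↑u ↑v := by simpa using hadj
    have hrv : CReach H w ↑v := creach_trans hr ⟨u.2, v.2, by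
      exact SimpleGraph.Adj.reachable (by simpa using hadj)⟩
    have hvAB : ↑v ∈ A ∨ ↑v ∈ B := hverts _ v.2
    have hFadj : F.Adj ↑u ↑v := hHF.2 hadj'
    have : ¬(↑v ∈ B \ A) := fun hvBA =>
      hsep _ _ hFadj ⟨Finset.mem_sdiff.2 ⟨huA, huB⟩, hvBA⟩
    have hvA : ↑v ∈ A := by
      rcases hvAB with h | h
      · exact h
      · by_contra hA
        exact this (Finset.mem_sdiff.2 ⟨h, hA⟩)
    exact ⟨hrv, hvA, fun hvB => hdisj _ hrv ⟨hvA, hvB⟩⟩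
  rintro v hv
  obtain ⟨hw', hv', r⟩ := hv
  have hwB : w ∉ B := fun hB => hdisj w (mem_comp_self hw) ⟨hwA, hB⟩
  have := key (u := ⟨w, hw'⟩) (v := ⟨v, hv'⟩) r.some ⟨creach_refl hw', hwA, hwB⟩
  exact ⟨this.2.1, this.2.2⟩

noncomputable def compF {G : SimpleGraph V} (H : G.Subgraph) (w : V) : Finset V :=
  (Set.toFinite (cloudComp H w)).toFinset

lemma mem_compF {H : G.Subgraph} {w v : V} : v ∈ compF H w ↔ v ∈ cloudComp H w :=
  Set.Finite.mem_toFinset _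

lemma ncard_comp {H : G.Subgraph} {w : V} : (cloudComp H w).ncard = (compF H w).card :=
  Set.ncard_eq_toFinset_card _ _

lemma cloudSize_eq_card_biUnion {W : Finset V} {H : G.Subgraph} (hc : IsCloud G W H)
    {U : Finset V} (hU : U ⊆ W) :
    cloudSize H U = (U.biUnion (compF H)).card := by
  rw [Finset.card_biUnion]
  · exact Finset.sum_congr rfl fun w _ => ncard_comp
  · intro x hx y hy hxy
    rw [Function.onFun, Finset.disjoint_left]
    intro z hz hz'
    have := comp_disjoint hc (hU hx) (hU hy) hxy
    rw [Set.eq_empty_iff_forall_notMem] at this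
    exact this z ⟨mem_compF.1 hz, mem_compF.1 hz'⟩

lemma cloudSize_le {W : Finset V} {H : G.Subgraph} (hc : IsCloud G W H)
    {U : Finset V} (hU : U ⊆ W) {Z : Set V} (hZ : ∀ w ∈ U, cloudComp H w ⊆ Z) :
    cloudSize H U ≤ Z.ncard := by
  rw [cloudSize_eq_card_biUnion hc hU, Set.ncard_eq_toFinset_card Z (Set.toFinite Z)]
  apply Finset.card_le_card
  intro v hv
  obtain ⟨w, hw, hv⟩ := Finset.mem_biUnion.1 hv
  exact (Set.Finite.mem_toFinset _).2 (hZ w hw (mem_compF.1 hv))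

lemma le_cloudSize {W : Finset V} {H : G.Subgraph} (hc : IsCloud G W H)
    {U : Finset V} (hU : U ⊆ W) {Z : Set V}
    (hZ : ∀ z ∈ Z, ∃ w ∈ U, z ∈ cloudComp H w) :
    Z.ncard ≤ cloudSize H U := by
  rw [cloudSize_eq_card_biUnion hc hU, Set.ncard_eq_toFinset_card Z (Set.toFinite Z)]
  apply Finset.card_le_card
  intro v hv
  obtain ⟨w, hw, hv'⟩ := hZ v ((Set.Finite.mem_toFinset _).1 hv)
  exact Finset.mem_biUnion.2 ⟨w, hw, mem_compF.2 hv'⟩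

lemma cloudSize_W {W : Finset V} {H : G.Subgraph} (hc : IsCloud G W H) :
    cloudSize H W = H.verts.ncard := by
  refine le_antisymm (cloudSize_le hc (Finset.Subset.refl W) fun w _ => comp_subset_verts) ?_
  exact le_cloudSize hc (Finset.Subset.refl W) fun z hz => comp_cover hc hz

lemma cloudSize_split {H : G.Subgraph} {U W : Finset V} (hU : U ⊆ W) :
    cloudSize H W = cloudSize H U + cloudSize H (W \ U) := by
  unfold cloudSize
  rw [← Finset.sum_sdiff hU]
  ring

end Helpers

/-- If `(X, Y) ∈ T` has order exactly `70a` with `|Y|` minimal, `W = X ∩ Y`, and `H` is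
a strongly `(3|Y|, 1/35)`-tame `W`-cloud in `G[X]`, then every balanced separation
`(A, B)` of `F = G[Y] ∪ H` of order at most `a` satisfies `|A ∩ X ∩ Y| ≤ a`. -/
theorem small_side_meets_few_cut_vertices (G : SimpleGraph V) (a : ℕ) (ha : 1 ≤ a)
    (hsn : sepNum G ≤ a)
    (T : Set (G.Subgraph × G.Subgraph)) (θ : ℕ) (hθ : 70 * a + 1 ≤ θ)
    (hT : IsTangle G T θ)
    (X Y : Finset V) (hXY : SepOf (⊤ : G.Subgraph) X Y)
    (hord : (X ∩ Y).card = 70 * a)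
    (hmem : sepPair G X Y ∈ T)
    (hmin : ∀ X' Y' : Finset V, SepOf (⊤ : G.Subgraph) X' Y' →
      (X' ∩ Y').card ≤ 70 * a → sepPair G X' Y' ∈ T → Y.card ≤ Y'.card)
    (H : G.Subgraph) (hHX : H ≤ (⊤ : G.Subgraph).induce ↑X)
    (hH : IsStronglyTameCloud G (X ∩ Y) H (3 * (Y.card : ℝ)) (1 / 35))
    (A B : Finset V)
    (hAB : BalancedSepOf ((⊤ : G.Subgraph).induce ↑Y ⊔ H) A B)
    (hABord : (A ∩ B).card ≤ a) :
    (A ∩ X ∩ Y).card ≤ a := by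
  classical
  obtain ⟨hsep, hbal1, hbal2⟩ := hAB
  set W := X ∩ Y with hWdef
  set F := ((⊤ : G.Subgraph).induce ↑Y ⊔ H) with hF
  have hcloud : IsCloud G W H := hH.1
  have hABv : (↑A ∪ ↑B : Set V) = F.verts := hsep.1
  have hsepE : ∀ u v : V, F.Adj u v → ¬(u ∈ A \ B ∧ v ∈ B \ A) := hsep.2
  have hsepE' : ∀ u v : V, F.Adj u v → ¬(u ∈ B \ A ∧ v ∈ A \ B) :=
    fun u v h hc => hsepE v u h.symm ⟨hc.2, hc.1⟩
  have hFverts : F.verts = ↑Y ∪ H.verts := by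
    simp [hF, SimpleGraph.Subgraph.verts_sup]
  have hNX : H.verts ⊆ (↑X : Set V) := hHX.1
  have hWH : (↑W : Set V) ⊆ H.verts := hcloud.2.1
  have hWY : W ⊆ Y := Finset.inter_subset_right
  have hyW : 70 * a ≤ Y.card := hord ▸ Finset.card_le_card hWY
  have hcovH : ∀ x, x ∈ H.verts → x ∈ A ∨ x ∈ B := by
    intro x hx
    have hx2 : x ∈ (↑A ∪ ↑B : Set V) := by rw [hABv, hFverts]; exact Or.inr hx
    simpa using hx2
  have hYAB : ∀ x, x ∈ Y → x ∈ A ∨ x ∈ B := by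
    intro x hx
    have hx2 : x ∈ (↑A ∪ ↑B : Set V) := by
      rw [hABv, hFverts]; exact Or.inl (by simpa using hx)
    simpa using hx2
  have hFY : ∀ u v, u ∈ Y → v ∈ Y → G.Adj u v → F.Adj u v := by
    intro u v hu hv hadj
    exact SimpleGraph.Subgraph.sup_adj.2 (Or.inl (by
      simp only [SimpleGraph.Subgraph.induce_adj, SimpleGraph.Subgraph.top_adj,
        Finset.mem_coe]
      exact ⟨hu, hv, hadj⟩))
  have hXcov : ∀ x : V, x ∈ X ∨ x ∈ Y := by
    intro x
    have hx : x ∈ (↑X ∪ ↑Y : Set V) := by rw [hXY.1]; trivial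
    simpa using hx
  -- classification of clouds
  set WS := W.filter (fun w => ∃ v ∈ cloudComp H w, v ∈ A ∧ v ∈ B) with hWSdef
  set WA := W.filter (fun w => ∀ v ∈ cloudComp H w, v ∈ A ∧ v ∉ B) with hWAdef
  set WB := W.filter (fun w => ∀ v ∈ cloudComp H w, v ∈ B ∧ v ∉ A) with hWBdef
  have htri : ∀ w ∈ W, w ∈ WS ∨ w ∈ WA ∨ w ∈ WB := by
    intro w hw
    by_cases hs : ∃ v ∈ cloudComp H w, v ∈ A ∧ v ∈ B
    · exact Or.inl (Finset.mem_filter.2 ⟨hw, hs⟩)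
    · have hdisj : ∀ v ∈ cloudComp H w, ¬(v ∈ A ∧ v ∈ B) :=
        fun v hv hc => hs ⟨v, hv, hc⟩
      have hwH : w ∈ H.verts := hWH (by simpa using hw)
      rcases hcovH w hwH with hwA | hwB
      · exact Or.inr (Or.inl (Finset.mem_filter.2
          ⟨hw, comp_subset_of le_sup_right hsepE hcovH hdisj hwA hwH⟩))
      · refine Or.inr (Or.inr (Finset.mem_filter.2
          ⟨hw, comp_subset_of le_sup_right hsepE'
            (fun x hx => (hcovH x hx).symm) (fun v hv hc => hdisj v hv ⟨hc.2, hc.1⟩) hwB hwH⟩))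
  have hWSX : WS.card ≤ ((A ∩ B) ∩ X).card := by
    have hex : ∀ w : V, ∃ v, w ∈ WS → (v ∈ cloudComp H w ∧ v ∈ A ∧ v ∈ B) := by
      intro w
      by_cases h : w ∈ WS
      · obtain ⟨-, v, hv, hc⟩ := Finset.mem_filter.1 h
        exact ⟨v, fun _ => ⟨hv, hc⟩⟩
      · exact ⟨w, fun hw => absurd hw h⟩
    choose f hf using hex
    apply Finset.card_le_card_of_injOn f
    · intro w hw
      obtain ⟨hv, hA', hB'⟩ := hf w hw
      have hfX : f w ∈ (↑X : Set V) := hNX (comp_subset_verts hv)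
      exact Finset.mem_inter.2 ⟨Finset.mem_inter.2 ⟨hA', hB'⟩, by simpa using hfX⟩
    · intro w1 h1 w2 h2 heq
      by_contra hne
      have hd := comp_disjoint hcloud (Finset.filter_subset _ _ h1)
        (Finset.filter_subset _ _ h2) hne
      rw [Set.eq_empty_iff_forall_notMem] at hd
      exact hd (f w1) ⟨(hf w1 h1).1, heq ▸ (hf w2 h2).1⟩
  have hABsplit : ((A ∩ B) ∩ X).card + ((A ∩ B) \ X).card = (A ∩ B).card :=
    Finset.card_inter_add_card_sdiff _ _
  have hVF : F.verts.ncard + 70 * a = Y.card + cloudSize H W := by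
    have hYH : (↑Y : Set V) ∩ H.verts = ↑W := by
      ext x
      constructor
      · rintro ⟨hxY, hxH⟩
        have hxX : x ∈ (↑X : Set V) := hNX hxH
        simp only [hWdef, Finset.coe_inter, Set.mem_inter_iff]
        exact ⟨hxX, hxY⟩
      · intro hx
        have hx' : x ∈ W := by simpa using hx
        exact ⟨by exact_mod_cast hWY hx', hWH hx⟩
    have hu := Set.ncard_union_add_ncard_inter (↑Y : Set V) H.verts
      (Set.toFinite _) (Set.toFinite _)
    rw [hYH] at hu
    rw [hFverts, cloudSize_W hcloud]
    have h1 : (↑Y : Set V).ncard = Y.card := Set.ncard_coe_finset _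
    have h2 : (↑W : Set V).ncard = 70 * a := by rw [Set.ncard_coe_finset]; exact hord
    omega
  have hVFcard : F.verts.ncard = (A \ B).card + (B \ A).card + (A ∩ B).card := by
    have h1 : F.verts.ncard = (A ∪ B).card := by
      rw [← hABv, ← Finset.coe_union, Set.ncard_coe_finset]
    have h2 := Finset.card_inter_add_card_sdiff A B
    have h3 := Finset.card_inter_add_card_sdiff B A
    have h4 := Finset.card_union_add_card_inter A B
    rw [Finset.inter_comm B A] at h3
    omega
  have hreal : ∀ U : Finset V, 68 * a ≤ U.card →
      (1 - 1 / 35 : ℝ) * (W.card : ℝ) ≤ (U.card : ℝ) := by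
    intro U hU
    rw [hord]
    have hc : (68 * a : ℝ) ≤ (U.card : ℝ) := by exact_mod_cast hU
    push_cast
    linarith
  have key : ∀ U S : Finset V, U ⊆ W → 68 * a ≤ U.card →
      (∀ w ∈ U, ∀ v ∈ cloudComp H w, v ∈ S) → 3 * S.card ≤ 2 * F.verts.ncard → False := by
    intro U S hUW hUc hcomp hbal
    have hα : cloudSize H U ≤ S.card := by
      have hle := cloudSize_le hcloud hUW (Z := (↑S : Set V))
        (fun w hw v hv => by simpa using hcomp w hw v hv)
      simpa [Set.ncard_coe_finset] using hle
    have htame := hH.2 U hUW (hreal U hUc)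
    have htameN : 3 * Y.card + 3 * cloudSize H (W \ U) ≤ cloudSize H U := by
      exact_mod_cast htame
    have hsplit := cloudSize_split (H := H) hUW
    omega
  have caseYA : Y ⊆ A → False := by
    intro hYA
    have hBA : ∀ z ∈ (↑(B \ A) : Set V), ∃ w ∈ WS, z ∈ cloudComp H w := by
      intro z hz
      rw [Finset.mem_coe, Finset.mem_sdiff] at hz
      have hzF : z ∈ F.verts := by
        rw [← hABv]; exact Or.inr (by simpa using hz.1)
      have hzH : z ∈ H.verts := by
        rw [hFverts] at hzF
        rcases hzF with h | h
        · exact absurd (hYA (by simpa using h)) hz.2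
        · exact h
      obtain ⟨w, hwW, hzw⟩ := comp_cover hcloud hzH
      rcases htri w hwW with h | h | h
      · exact ⟨w, h, hzw⟩
      · exact absurd ((Finset.mem_filter.1 h).2 z hzw).1 hz.2
      · have hwY : w ∈ A := hYA (hWY hwW)
        exact absurd hwY ((Finset.mem_filter.1 h).2 w
          (mem_comp_self (hWH (by simpa using hwW)))).2
    have hσ : (B \ A).card ≤ cloudSize H WS := by
      have hle := le_cloudSize hcloud (Finset.filter_subset _ _) hBA
      rw [Set.ncard_coe_finset] at hle
      exact hle
    have hWSW : WS ⊆ W := Finset.filter_subset _ _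
    have hWSa : WS.card ≤ a :=
      le_trans hWSX (le_trans (Finset.card_le_card Finset.inter_subset_left) hABord)
    have hWc : W.card = 70 * a := hord
    have hUc : 68 * a ≤ (W \ WS).card := by
      rw [Finset.card_sdiff_of_subset hWSW]
      omega
    have htame := hH.2 (W \ WS) Finset.sdiff_subset (hreal _ hUc)
    have hrw : W \ (W \ WS) = WS := Finset.sdiff_sdiff_eq_self hWSW
    rw [hrw] at htame
    have htameN : 3 * Y.card + 3 * cloudSize H WS ≤ cloudSize H (W \ WS) := by
      exact_mod_cast htame
    have hsplit := cloudSize_split (H := H) hWSW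
    omega
  -- corner separations
  have cornerSep : ∀ A' B' : Finset V,
      (∀ u v, F.Adj u v → ¬(u ∈ A' \ B' ∧ v ∈ B' \ A')) →
      (∀ x, x ∈ Y → x ∈ A' ∨ x ∈ B') →
      SepOf (⊤ : G.Subgraph) (X ∪ (A' ∩ Y)) (B' ∩ Y) := by
    intro A' B' hs hc
    constructor
    · rw [SimpleGraph.Subgraph.verts_top, Set.eq_univ_iff_forall]
      intro x
      simp only [Set.mem_union, Finset.coe_union, Finset.coe_inter, Finset.mem_coe,
        Set.mem_inter_iff]
      rcases hXcov x with hx | hx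
      · exact Or.inl (Or.inl hx)
      · rcases hc x hx with h | h
        · exact Or.inl (Or.inr ⟨h, hx⟩)
        · exact Or.inr ⟨h, hx⟩
    · intro u v hadj huv
      obtain ⟨hu, hv⟩ := huv
      rw [Finset.mem_sdiff] at hu hv
      obtain ⟨hu1, hu2⟩ := hu
      obtain ⟨hv1, hv2⟩ := hv
      have hvY : v ∈ Y := (Finset.mem_inter.1 hv1).2
      have hvB : v ∈ B' := (Finset.mem_inter.1 hv1).1
      have hvX : v ∉ X := fun h => hv2 (Finset.mem_union_left _ h)
      have hvA : v ∉ A' := fun h => hv2 (Finset.mem_union_right _ (Finset.mem_inter.2 ⟨h, hvY⟩))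
      have hG : G.Adj u v := by simpa using hadj
      rcases Finset.mem_union.1 hu1 with huX | huC
      · by_cases huY : u ∈ Y
        · have huB : u ∉ B' := fun h => hu2 (Finset.mem_inter.2 ⟨h, huY⟩)
          have huA : u ∈ A' := (hc u huY).resolve_right huB
          exact hs u v (hFY u v huY hvY hG)
            ⟨Finset.mem_sdiff.2 ⟨huA, huB⟩, Finset.mem_sdiff.2 ⟨hvB, hvA⟩⟩
        · exact hXY.2 u v hadj
            ⟨Finset.mem_sdiff.2 ⟨huX, huY⟩, Finset.mem_sdiff.2 ⟨hvY, hvX⟩⟩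
      · have huY : u ∈ Y := (Finset.mem_inter.1 huC).2
        have huB : u ∉ B' := fun h => hu2 (Finset.mem_inter.2 ⟨h, huY⟩)
        exact hs u v (hFY u v huY hvY hG)
          ⟨Finset.mem_sdiff.2 ⟨(Finset.mem_inter.1 huC).1, huB⟩,
            Finset.mem_sdiff.2 ⟨hvB, hvA⟩⟩
  have hsepD : SepOf (⊤ : G.Subgraph) (X ∪ (A ∩ Y)) (B ∩ Y) := cornerSep A B hsepE hYAB
  have hsepC : SepOf (⊤ : G.Subgraph) (X ∪ (B ∩ Y)) (A ∩ Y) :=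
    cornerSep B A hsepE' (fun x hx => (hYAB x hx).symm)
  set C := A ∩ Y with hCdef
  set D := B ∩ Y with hDdef
  by_cases hK2 : ((X ∪ D) ∩ C).card ≤ 70 * a
  · rcases sepPair_orient hT hsepC (by omega) with hin | hrevC
    · exfalso
      have hCeq : C = Y := Finset.eq_of_subset_of_card_le Finset.inter_subset_right
        (hmin _ _ hsepC hK2 hin)
      apply caseYA
      intro y hy
      have hyC : y ∈ C := by rw [hCeq]; exact hy
      exact (Finset.mem_inter.1 hyC).1
    · by_cases hK1 : ((X ∪ C) ∩ D).card ≤ 70 * a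
      · rcases sepPair_orient hT hsepD (by omega) with hin | hrevD
        · have hDeq : D = Y := Finset.eq_of_subset_of_card_le Finset.inter_subset_right
            (hmin _ _ hsepD hK1 hin)
          have hsub : A ∩ X ∩ Y ⊆ A ∩ B := by
            intro x hx
            rw [Finset.mem_inter] at hx
            obtain ⟨hx1, hxY⟩ := hx
            have hxD : x ∈ D := by rw [hDeq]; exact hxY
            exact Finset.mem_inter.2 ⟨(Finset.mem_inter.1 hx1).1, (Finset.mem_inter.1 hxD).1⟩
          exact le_trans (Finset.card_le_card hsub) hABord
        · exfalso
          apply hT.2.2.2.1 _ hrevC _ hrevD _ hmem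
          apply eq_top_of
          · intro x
            simp only [SimpleGraph.Subgraph.verts_sup, SimpleGraph.Subgraph.induce_verts,
              Set.mem_union, Finset.mem_coe]
            rcases hXcov x with hx | hx
            · exact Or.inr hx
            · rcases hYAB x hx with h | h
              · exact Or.inl (Or.inl (Finset.mem_inter.2 ⟨h, hx⟩))
              · exact Or.inl (Or.inr (Finset.mem_inter.2 ⟨h, hx⟩))
          · intro u v hadj
            simp only [SimpleGraph.Subgraph.sup_adj, SimpleGraph.Subgraph.induce_adj,
              SimpleGraph.Subgraph.top_adj, Finset.mem_coe]
            by_cases hXb : u ∈ X ∧ v ∈ X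
            · exact Or.inr ⟨hXb.1, hXb.2, hadj⟩
            · have hUV : u ∈ Y ∧ v ∈ Y := by
                rcases not_and_or.1 hXb with h | h
                · exact sep_side hXY hadj h
                · have h2 := sep_side hXY hadj.symm h
                  exact ⟨h2.2, h2.1⟩
              left
              by_cases huA : u ∈ A
              · by_cases hvA : v ∈ A
                · exact Or.inl ⟨Finset.mem_inter.2 ⟨huA, hUV.1⟩,
                    Finset.mem_inter.2 ⟨hvA, hUV.2⟩, hadj⟩
                · have hvB : v ∈ B := (hYAB v hUV.2).resolve_left hvA
                  by_cases huB : u ∈ B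
                  · exact Or.inr ⟨Finset.mem_inter.2 ⟨huB, hUV.1⟩,
                      Finset.mem_inter.2 ⟨hvB, hUV.2⟩, hadj⟩
                  · exact absurd ⟨Finset.mem_sdiff.2 ⟨huA, huB⟩, Finset.mem_sdiff.2 ⟨hvB, hvA⟩⟩
                      (hsepE u v (hFY u v hUV.1 hUV.2 hadj))
              · have huB : u ∈ B := (hYAB u hUV.1).resolve_left huA
                by_cases hvB : v ∈ B
                · exact Or.inr ⟨Finset.mem_inter.2 ⟨huB, hUV.1⟩,
                    Finset.mem_inter.2 ⟨hvB, hUV.2⟩, hadj⟩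
                · have hvA : v ∈ A := (hYAB v hUV.2).resolve_right hvB
                  exact absurd ⟨Finset.mem_sdiff.2 ⟨hvA, hvB⟩, Finset.mem_sdiff.2 ⟨huB, huA⟩⟩
                    (hsepE v u (hFY v u hUV.2 hUV.1 hadj.symm))
      · exfalso
        have hK1' : 70 * a + 1 ≤ ((X ∪ C) ∩ D).card := by omega
        have hsub : (X ∪ C) ∩ D ⊆ (W ∩ B) ∪ ((A ∩ B ∩ Y) \ X) := by
          intro u hu
          rw [Finset.mem_inter] at hu
          obtain ⟨hu1, hu2⟩ := hu
          have huB : u ∈ B := (Finset.mem_inter.1 hu2).1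
          have huY : u ∈ Y := (Finset.mem_inter.1 hu2).2
          by_cases hx : u ∈ X
          · exact Finset.mem_union_left _
              (Finset.mem_inter.2 ⟨Finset.mem_inter.2 ⟨hx, huY⟩, huB⟩)
          · have huC : u ∈ C := (Finset.mem_union.1 hu1).resolve_left hx
            exact Finset.mem_union_right _ (Finset.mem_sdiff.2
              ⟨Finset.mem_inter.2 ⟨Finset.mem_inter.2 ⟨(Finset.mem_inter.1 huC).1, huB⟩, huY⟩, hx⟩)
        have hcard1 : 70 * a + 1 ≤ (W ∩ B).card + ((A ∩ B ∩ Y) \ X).card :=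
          le_trans hK1' (le_trans (Finset.card_le_card hsub) (Finset.card_union_le _ _))
        have hsub2 : W ∩ B ⊆ WB ∪ WS := by
          intro w hw
          rw [Finset.mem_inter] at hw
          rcases htri w hw.1 with h | h | h
          · exact Finset.mem_union_right _ h
          · exact absurd hw.2
              ((Finset.mem_filter.1 h).2 w (mem_comp_self (hWH (by simpa using hw.1)))).2
          · exact Finset.mem_union_left _ h
        have h5 : (W ∩ B).card ≤ WB.card + WS.card :=
          le_trans (Finset.card_le_card hsub2) (Finset.card_union_le _ _)
        have h6 : ((A ∩ B ∩ Y) \ X).card ≤ ((A ∩ B) \ X).card :=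
          Finset.card_le_card
            (Finset.sdiff_subset_sdiff Finset.inter_subset_left (Finset.Subset.refl _))
        have hWBbig : 68 * a ≤ WB.card := by omega
        exact key WB (B \ A) (Finset.filter_subset _ _) hWBbig
          (fun w hw v hv => Finset.mem_sdiff.2 ((Finset.mem_filter.1 hw).2 v hv))
          hbal2
  · exfalso
    have hK2' : 70 * a + 1 ≤ ((X ∪ D) ∩ C).card := by omega
    have hsub : (X ∪ D) ∩ C ⊆ (W ∩ A) ∪ ((A ∩ B ∩ Y) \ X) := by
      intro u hu
      rw [Finset.mem_inter] at hu
      obtain ⟨hu1, hu2⟩ := hu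
      have huA : u ∈ A := (Finset.mem_inter.1 hu2).1
      have huY : u ∈ Y := (Finset.mem_inter.1 hu2).2
      by_cases hx : u ∈ X
      · exact Finset.mem_union_left _
          (Finset.mem_inter.2 ⟨Finset.mem_inter.2 ⟨hx, huY⟩, huA⟩)
      · have huD : u ∈ D := (Finset.mem_union.1 hu1).resolve_left hx
        exact Finset.mem_union_right _ (Finset.mem_sdiff.2
          ⟨Finset.mem_inter.2 ⟨Finset.mem_inter.2 ⟨huA, (Finset.mem_inter.1 huD).1⟩, huY⟩, hx⟩)
    have hcard1 : 70 * a + 1 ≤ (W ∩ A).card + ((A ∩ B ∩ Y) \ X).card :=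
      le_trans hK2' (le_trans (Finset.card_le_card hsub) (Finset.card_union_le _ _))
    have hsub2 : W ∩ A ⊆ WA ∪ WS := by
      intro w hw
      rw [Finset.mem_inter] at hw
      rcases htri w hw.1 with h | h | h
      · exact Finset.mem_union_right _ h
      · exact Finset.mem_union_left _ h
      · exact absurd hw.2
          ((Finset.mem_filter.1 h).2 w (mem_comp_self (hWH (by simpa using hw.1)))).2
    have h5 : (W ∩ A).card ≤ WA.card + WS.card :=
      le_trans (Finset.card_le_card hsub2) (Finset.card_union_le _ _)
    have h6 : ((A ∩ B ∩ Y) \ X).card ≤ ((A ∩ B) \ X).card :=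
      Finset.card_le_card
        (Finset.sdiff_subset_sdiff Finset.inter_subset_left (Finset.Subset.refl _))
    have hWAbig : 68 * a ≤ WA.card := by omega
    exact key WA (A \ B) (Finset.filter_subset _ _) hWAbig
      (fun w hw v hv => Finset.mem_sdiff.2 ((Finset.mem_filter.1 hw).2 v hv))
      hbal1
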